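/- If F = (X; f₁,…,f_N) is a point-fibred IFS on a compact Hausdorff space X with coding map π, then for every nonempty compact subset B ⊆ X and every σ ∈ I^∞, the sets f_{σ|k}(B) = f_{σ₁} ∘ f_{σ₂} ∘ ⋯ ∘ f_{σ_k}(B) converge to the singleton {π(σ)} in the Vietoris topology on K(X) as k → ∞. -/

import Mathlib

open Set Topology Filter

def seqComp {X : Type*} {N : ℕ} (f : Fin N → X → X) (σ : ℕ → Fin N) : ℕ → X → X
  | 0 => id
  | k + 1 => seqComp f σ k ∘ f (σ k)

def PiMap {X : Type*} {N : ℕ} (f : Fin N → X → X) (σ : ℕ → Fin N) : Set X :=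
  ⋂ k : ℕ, seqComp f σ (k + 1) '' Set.univ

def vietoris (X : Type*) [TopologicalSpace X] : TopologicalSpace (Set X) :=
  TopologicalSpace.generateFrom
    ({S | ∃ U : Set X, IsOpen U ∧ S = {B : Set X | B ⊆ U}} ∪
     {S | ∃ U : Set X, IsOpen U ∧ S = {B : Set X | (B ∩ U).Nonempty}})

lemma seqComp_continuous {X : Type*} [TopologicalSpace X] {N : ℕ} {f : Fin N → X → X}
    (hf : ∀ i, Continuous (f i)) (σ : ℕ → Fin N) (k : ℕ) :
    Continuous (seqComp f σ k) := by
  induction k with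
  | zero => exact continuous_id
  | succ k ih => exact ih.comp (hf _)

lemma seqComp_image_anti {X : Type*} {N : ℕ} {f : Fin N → X → X} {σ : ℕ → Fin N} (k : ℕ)
    (B : Set X) : seqComp f σ (k + 1) '' B ⊆ seqComp f σ k '' Set.univ := by
  rintro _ ⟨x, -, rfl⟩
  exact ⟨f (σ k) x, trivial, rfl⟩

-- key: if π σ ∈ U open, eventually seqComp f σ k '' B ⊆ U
lemma eventually_subset {X : Type*} [TopologicalSpace X] [CompactSpace X] [T2Space X]
    {N : ℕ} {f : Fin N → X → X} (hf : ∀ i, Continuous (f i))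
    {π : (ℕ → Fin N) → X} (hπ : ∀ σ, PiMap f σ = {π σ}) (B : Set X)
    (σ : ℕ → Fin N) {U : Set X} (hU : IsOpen U) (hx : π σ ∈ U) :
    ∀ᶠ k in atTop, seqComp f σ k '' B ⊆ U := by
  set A : ℕ → Set X := fun k => seqComp f σ (k + 1) '' Set.univ with hA
  have hAc : ∀ k, IsClosed (A k) :=
    fun k => (isCompact_univ.image (seqComp_continuous hf σ (k + 1))).isClosed
  have hanti : Antitone A := antitone_nat_of_succ_le fun k => seqComp_image_anti (k + 1) _
  have hcap : (Uᶜ ∩ ⋂ k, A k) = ∅ := by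
    have : (⋂ k, A k) = {π σ} := hπ σ
    rw [this]
    simp only [eq_empty_iff_forall_notMem, mem_inter_iff, mem_compl_iff, mem_singleton_iff]
    rintro y ⟨hy, rfl⟩; exact hy hx
  obtain ⟨k₀, hk₀⟩ := (hU.isClosed_compl.isCompact).elim_directed_family_closed A hAc hcap
    (hanti.directed_ge)
  filter_upwards [eventually_ge_atTop (k₀ + 1)] with k hk
  intro y hy
  have hyA : y ∈ A k₀ := by
    obtain ⟨k', rfl⟩ : ∃ k', k = k' + 1 := ⟨k - 1, by omega⟩
    have h1 : y ∈ A k' := image_mono (subset_univ B) hy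
    exact hanti (by omega) h1
  by_contra hyU
  have : y ∈ Uᶜ ∩ A k₀ := ⟨hyU, hyA⟩
  rw [hk₀] at this; exact this

theorem seqComp_image_tendsto_singleton
    {X : Type*} [TopologicalSpace X] [CompactSpace X] [T2Space X] [Nonempty X]
    {N : ℕ} (f : Fin N → X → X) (hf : ∀ i, Continuous (f i))
    (π : (ℕ → Fin N) → X) (hπ : ∀ σ, PiMap f σ = {π σ}) :
    ∀ B : Set X, B.Nonempty → IsCompact B → ∀ σ : ℕ → Fin N,
      Filter.Tendsto (fun k => seqComp f σ k '' B)
        Filter.atTop (@nhds (Set X) (vietoris X) ({π σ} : Set X)) := by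
  intro B hB hBc σ
  rw [vietoris, TopologicalSpace.tendsto_nhds_generateFrom_iff]
  rintro s (⟨U, hU, rfl⟩ | ⟨U, hU, rfl⟩) hs
  · have hx : π σ ∈ U := hs rfl
    exact eventually_subset hf hπ B σ hU hx
  · have hx : π σ ∈ U := by
      obtain ⟨y, hy1, hy2⟩ := hs
      rw [mem_singleton_iff] at hy1; rwa [← hy1]
    filter_upwards [eventually_subset hf hπ B σ hU hx] with k hk
    obtain ⟨b, hb⟩ := hB
    exact ⟨seqComp f σ k b, ⟨b, hb, rfl⟩, hk ⟨b, hb, rfl⟩⟩
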